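/- Let B ∈ ℝ^{n×m}, let P ∈ ℝ^{n×n} be symmetric, let e ∈ ℝ^n with s := Bᵀ P e ≠ 0, let M ∈ ℝ^{m×m} with ‖M‖ ≤ M̄ where 0 ≤ M̄ < 1, and let d ∈ ℝ^m with ‖d‖ ≤ d̄. If ρ ≥ (1 + M̄)·d̄/(1 − M̄), then eᵀ P (B + B M) d − ρ · eᵀ P (B + B M) (s/‖s‖) ≤ −‖s‖·(ρ(1 − M̄) − (1 + M̄) d̄) ≤ 0. -/

import Mathlib

open Matrix
open scoped Matrix.Norms.L2Operator

/-- Euclidean norm of a finitely-indexed real vector. -/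
noncomputable def enorm' {ι : Type*} [Fintype ι] (x : ι → ℝ) : ℝ :=
  ‖(EuclideanSpace.equiv ι ℝ).symm x‖

open scoped RealInnerProductSpace in
lemma dot_eq_inner' {ι : Type*} [Fintype ι] (x y : ι → ℝ) :
    x ⬝ᵥ y = ⟪(EuclideanSpace.equiv ι ℝ).symm x, (EuclideanSpace.equiv ι ℝ).symm y⟫ := by
  rw [EuclideanSpace.inner_eq_star_dotProduct]
  simp [dotProduct, mul_comm]

lemma abs_dot_le' {ι : Type*} [Fintype ι] (x y : ι → ℝ) :
    |x ⬝ᵥ y| ≤ enorm' x * enorm' y := by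
  rw [dot_eq_inner']; exact abs_real_inner_le_norm _ _

lemma dot_self_eq' {ι : Type*} [Fintype ι] (x : ι → ℝ) :
    x ⬝ᵥ x = enorm' x ^ 2 := by
  rw [dot_eq_inner', real_inner_self_eq_norm_sq]; rfl

lemma enorm_mulVec_le' {k l : ℕ} (A : Matrix (Fin k) (Fin l) ℝ) (x : Fin l → ℝ) :
    enorm' (A *ᵥ x) ≤ ‖A‖ * enorm' x :=
  A.l2_opNorm_mulVec _

/-- Robust disturbance rejection: with s = Bᵀ P e ≠ 0, matched uncertainty ΔB = B M,
‖M‖ ≤ M̄ < 1, ‖d‖ ≤ d̄ and gain ρ ≥ (1 + M̄)d̄/(1 − M̄), one has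
eᵀ P (B + BM) d − ρ eᵀ P (B + BM)(s/‖s‖) ≤ −‖s‖(ρ(1 − M̄) − (1 + M̄)d̄) ≤ 0. -/
theorem robust_term_dominates_disturbance (n m : ℕ)
    (B : Matrix (Fin n) (Fin m) ℝ) (P : Matrix (Fin n) (Fin n) ℝ) (hP : P.IsSymm)
    (e : Fin n → ℝ) (M : Matrix (Fin m) (Fin m) ℝ)
    (Mbar : ℝ) (hMbar0 : 0 ≤ Mbar) (hMbar1 : Mbar < 1) (hM : ‖M‖ ≤ Mbar)
    (d : Fin m → ℝ) (dbar : ℝ) (hd : enorm' d ≤ dbar)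
    (s : Fin m → ℝ) (hs : s = Bᵀ *ᵥ (P *ᵥ e)) (hs0 : s ≠ 0)
    (ρ : ℝ) (hρ : (1 + Mbar) * dbar / (1 - Mbar) ≤ ρ) :
    e ⬝ᵥ (P *ᵥ ((B + B * M) *ᵥ d))
        - ρ * (e ⬝ᵥ (P *ᵥ ((B + B * M) *ᵥ ((enorm' s)⁻¹ • s))))
      ≤ -(enorm' s) * (ρ * (1 - Mbar) - (1 + Mbar) * dbar) ∧
    -(enorm' s) * (ρ * (1 - Mbar) - (1 + Mbar) * dbar) ≤ 0 := by
  have key : ∀ v : Fin m → ℝ,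
      e ⬝ᵥ (P *ᵥ ((B + B * M) *ᵥ v)) = s ⬝ᵥ v + (Mᵀ *ᵥ s) ⬝ᵥ v := by
    intro v
    rw [Matrix.dotProduct_mulVec, ← Matrix.mulVec_transpose, hP.eq, Matrix.dotProduct_mulVec,
      ← Matrix.mulVec_transpose, Matrix.transpose_add, Matrix.transpose_mul, Matrix.add_mulVec,
      add_dotProduct, ← Matrix.mulVec_mulVec, ← hs]
  have hns : 0 < enorm' s := by
    rcases (norm_nonneg ((EuclideanSpace.equiv (Fin m) ℝ).symm s)).lt_or_eq with h | h
    · exact h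
    · exact absurd (by simpa using (norm_eq_zero.mp h.symm)) hs0
  have hMt : ‖Mᵀ‖ = ‖M‖ := by
    rw [← Matrix.conjTranspose_eq_transpose_of_trivial]
    exact M.l2_opNorm_conjTranspose
  have hd0 : 0 ≤ dbar := le_trans (norm_nonneg _) hd
  -- bounds
  have h1 : s ⬝ᵥ d ≤ enorm' s * dbar := by
    calc s ⬝ᵥ d ≤ |s ⬝ᵥ d| := le_abs_self _
    _ ≤ enorm' s * enorm' d := abs_dot_le' _ _
    _ ≤ enorm' s * dbar := by nlinarith [hns.le]
  have hMs : enorm' (Mᵀ *ᵥ s) ≤ Mbar * enorm' s := by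
    calc enorm' (Mᵀ *ᵥ s) ≤ ‖Mᵀ‖ * enorm' s := enorm_mulVec_le' _ _
    _ ≤ Mbar * enorm' s := by rw [hMt]; nlinarith [hns.le]
  have h2 : (Mᵀ *ᵥ s) ⬝ᵥ d ≤ Mbar * enorm' s * dbar := by
    calc (Mᵀ *ᵥ s) ⬝ᵥ d ≤ |(Mᵀ *ᵥ s) ⬝ᵥ d| := le_abs_self _
    _ ≤ enorm' (Mᵀ *ᵥ s) * enorm' d := abs_dot_le' _ _
    _ ≤ (Mbar * enorm' s) * dbar :=
        mul_le_mul hMs hd (norm_nonneg _) (by nlinarith [hns.le])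
  have h3 : s ⬝ᵥ s = enorm' s ^ 2 := dot_self_eq' _
  have h4 : -(Mbar * enorm' s ^ 2) ≤ (Mᵀ *ᵥ s) ⬝ᵥ s := by
    have := (abs_le.mp (abs_dot_le' (Mᵀ *ᵥ s) s |>.trans' (le_refl _) |> le_trans
      (le_abs_self _) |> fun _ => abs_dot_le' (Mᵀ *ᵥ s) s)).1
    have habs : |(Mᵀ *ᵥ s) ⬝ᵥ s| ≤ Mbar * enorm' s ^ 2 := by
      calc |(Mᵀ *ᵥ s) ⬝ᵥ s| ≤ enorm' (Mᵀ *ᵥ s) * enorm' s := abs_dot_le' _ _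
      _ ≤ Mbar * enorm' s ^ 2 := by nlinarith [hns.le]
    linarith [(abs_le.mp habs).1]
  have hρ' : (1 + Mbar) * dbar ≤ ρ * (1 - Mbar) := by
    rw [div_le_iff₀ (by linarith)] at hρ
    linarith
  have hρ0 : 0 ≤ ρ := by
    have : 0 ≤ (1 + Mbar) * dbar / (1 - Mbar) :=
      div_nonneg (by nlinarith) (by linarith)
    linarith
  constructor
  · rw [key d, key ((enorm' s)⁻¹ • s)]
    rw [dotProduct_smul, dotProduct_smul, h3]
    simp only [smul_eq_mul]
    have hinv : (enorm' s)⁻¹ * (enorm' s ^ 2) = enorm' s := by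
      field_simp
    have h5 : (enorm' s)⁻¹ * (-(Mbar * enorm' s ^ 2)) ≤ (enorm' s)⁻¹ * ((Mᵀ *ᵥ s) ⬝ᵥ s) :=
      mul_le_mul_of_nonneg_left h4 (inv_pos.mpr hns).le
    have hinv2 : (enorm' s)⁻¹ * (Mbar * enorm' s ^ 2) = Mbar * enorm' s := by
      field_simp
    nlinarith [h1, h2, h5, hρ0, mul_le_mul_of_nonneg_left
      (show enorm' s - Mbar * enorm' s ≤ (enorm' s)⁻¹ * (enorm' s ^ 2) + (enorm' s)⁻¹ * ((Mᵀ *ᵥ s) ⬝ᵥ s)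
        by nlinarith [h5]) hρ0]
  · nlinarith [hns.le, hρ']
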